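/- Let ν > 0, c ∈ ℝ, and let ρ_c(x) = A(c) exp(−(x−c)²/(2ν)) on [0,∞) be a truncated Gaussian density with A(c) = (2/√(2πν))/(1 + erf(c/√(2ν))). Define the interaction energy K[ρ_c] = (1/4)∫₀^∞∫₀^∞ (x−y)² ρ_c(x) ρ_c(y) dx dy. Then K[ρ_c] = (1/2)∫₀^∞ (x−c)² ρ_c(x) dx − (ν²/2)(A(c) exp(−c²/(2ν)))². -/

import Mathlib

open Real MeasureTheory

open Set Filter

/-- The error function `erf x = (2/√π) ∫₀ˣ exp(−t²) dt`. -/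
noncomputable def erf (x : ℝ) : ℝ := (2 / Real.sqrt Real.pi) * ∫ t in (0:ℝ)..x, Real.exp (-t^2)

lemma cont_gauss : Continuous fun t : ℝ => Real.exp (-t^2) := by
  continuity

lemma erf_hasDerivAt (x : ℝ) :
    HasDerivAt erf (2 / Real.sqrt Real.pi * Real.exp (-x^2)) x := by
  have h := (cont_gauss.integral_hasStrictDerivAt 0 x).hasDerivAt
  exact h.const_mul (2 / Real.sqrt Real.pi)

lemma gauss_integrableOn (a : ℝ) : IntegrableOn (fun t : ℝ => Real.exp (-t^2)) (Ioi a) := by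
  have : Integrable fun t : ℝ => Real.exp (-(1:ℝ) * t^2) := integrable_exp_neg_mul_sq one_pos
  simpa using this.integrableOn

lemma gauss_Ioi_zero : ∫ t in Ioi (0:ℝ), Real.exp (-t^2) = Real.sqrt Real.pi / 2 := by
  have := integral_gaussian_Ioi 1
  simpa using this

lemma erf_tendsto_one : Tendsto erf atTop (nhds 1) := by
  have h1 : Tendsto (fun x : ℝ => ∫ t in (0:ℝ)..x, Real.exp (-t^2)) atTop
      (nhds (∫ t in Ioi (0:ℝ), Real.exp (-t^2))) :=
    intervalIntegral_tendsto_integral_Ioi 0 (gauss_integrableOn 0) tendsto_id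
  have h2 := h1.const_mul (2 / Real.sqrt Real.pi)
  have hπ : Real.sqrt Real.pi ≠ 0 := by positivity
  have : (2 / Real.sqrt Real.pi) * (Real.sqrt Real.pi / 2) = 1 := by field_simp
  rw [gauss_Ioi_zero, this] at h2
  exact h2

lemma erf_neg (x : ℝ) : erf (-x) = - erf x := by
  unfold erf
  have h : ∫ t in (-x)..(0:ℝ), Real.exp (-t^2) = ∫ t in (0:ℝ)..x, Real.exp (-t^2) := by
    rw [show (0:ℝ) = -(-0) by ring, show x = -(-x) by ring]
    rw [← intervalIntegral.integral_comp_neg fun t => Real.exp (-t^2)]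
    simp
  rw [intervalIntegral.integral_symm] at h
  rw [show (∫ t in (0:ℝ)..(-x), Real.exp (-t^2)) = -∫ t in (0:ℝ)..x, Real.exp (-t^2) by
    linarith [h]]
  ring

lemma erf_lt_one (z : ℝ) : erf z < 1 := by
  rcases le_or_gt z 0 with hz | hz
  · have h0 : (∫ t in (0:ℝ)..z, Real.exp (-t^2)) ≤ 0 := by
      rw [intervalIntegral.integral_symm]
      have : 0 ≤ ∫ t in z..(0:ℝ), Real.exp (-t^2) :=
        intervalIntegral.integral_nonneg hz (fun u _ => (Real.exp_pos _).le)
      linarith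
    have : erf z ≤ 0 := by
      unfold erf
      have hc : 0 ≤ 2 / Real.sqrt Real.pi := by positivity
      exact mul_nonpos_of_nonneg_of_nonpos hc h0
    linarith
  · have key : (∫ t in (0:ℝ)..z, Real.exp (-t^2)) < Real.sqrt Real.pi / 2 := by
      rw [intervalIntegral.integral_of_le hz.le]
      have hsplit : ∫ t in Ioi (0:ℝ), Real.exp (-t^2)
          = (∫ t in Ioc (0:ℝ) z, Real.exp (-t^2)) + ∫ t in Ioi z, Real.exp (-t^2) := by
        rw [← setIntegral_union (Set.Ioc_disjoint_Ioi le_rfl) measurableSet_Ioi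
          ((gauss_integrableOn 0).mono_set Set.Ioc_subset_Ioi_self)
          ((gauss_integrableOn 0).mono_set (Set.Ioi_subset_Ioi hz.le)),
          Set.Ioc_union_Ioi_eq_Ioi hz.le]
      have hpos : 0 < ∫ t in Ioi z, Real.exp (-t^2) := by
        refine (setIntegral_pos_iff_support_of_nonneg_ae ?_ ?_).2 ?_
        · exact Eventually.of_forall fun t => (Real.exp_pos _).le
        · exact (gauss_integrableOn 0).mono_set (Set.Ioi_subset_Ioi hz.le)
        · have : (Function.support fun t : ℝ => Real.exp (-t^2)) = Set.univ := by
            ext t; simp [Function.support, (Real.exp_pos (-t^2)).ne']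
          rw [this, Set.univ_inter]
          simp
      rw [← gauss_Ioi_zero, hsplit]
      linarith
    unfold erf
    calc (2 / Real.sqrt Real.pi) * ∫ t in (0:ℝ)..z, Real.exp (-t^2)
        < (2 / Real.sqrt Real.pi) * (Real.sqrt Real.pi / 2) := by
          apply mul_lt_mul_of_pos_left key (by positivity)
      _ = 1 := by
          have hπ : Real.sqrt Real.pi ≠ 0 := by positivity
          field_simp

lemma neg_one_lt_erf (y : ℝ) : -1 < erf y := by
  have h := erf_lt_one (-y)
  rw [erf_neg] at h
  linarith

lemma integrable_aux {b : ℝ} (hb : 0 < b) (n : ℕ) :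
    Integrable fun x : ℝ => x ^ n * Real.exp (-b * x ^ 2) := by
  have h := integrable_rpow_mul_exp_neg_mul_sq hb
    (s := (n : ℝ)) (lt_of_lt_of_le neg_one_lt_zero (Nat.cast_nonneg n))
  simpa [Real.rpow_natCast] using h

lemma integrable_mom (ν c : ℝ) (hν : 0 < ν) (n : ℕ) :
    Integrable fun x : ℝ => (x - c) ^ n * Real.exp (-(x - c) ^ 2 / (2*ν)) := by
  have hb : (0:ℝ) < (2*ν)⁻¹ := by positivity
  have h := integrable_aux hb n
  have hmp : MeasurePreserving (fun x : ℝ => x - c) volume volume :=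
    measurePreserving_sub_right volume c
  have hmeas : AEStronglyMeasurable (fun x : ℝ => x ^ n * Real.exp (-(2*ν)⁻¹ * x ^ 2))
      (volume : Measure ℝ) := h.aestronglyMeasurable
  have h2 : Integrable ((fun x : ℝ => x ^ n * Real.exp (-(2*ν)⁻¹ * x ^ 2)) ∘ (fun x => x - c))
      volume := (hmp.integrable_comp hmeas).2 h
  refine h2.congr (Eventually.of_forall fun x => ?_)
  simp only [Function.comp_apply]
  congr 1
  ring_nf

lemma M0_integral (ν c : ℝ) (hν : 0 < ν) :
    ∫ x in Ioi (0:ℝ), Real.exp (-(x - c)^2 / (2*ν))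
      = Real.sqrt (2*Real.pi*ν)/2 * (1 + erf (c / Real.sqrt (2*ν))) := by
  set s : ℝ := Real.sqrt (2*ν) with hs_def
  have hs : 0 < s := Real.sqrt_pos.2 (by positivity)
  have hs2 : s^2 = 2*ν := Real.sq_sqrt (by positivity)
  set K : ℝ := Real.sqrt (2*Real.pi*ν)/2 with hK_def
  have hKs : Real.sqrt (2*Real.pi*ν) = Real.sqrt Real.pi * s := by
    rw [hs_def, ← Real.sqrt_mul Real.pi_pos.le]
    ring_nf
  set F : ℝ → ℝ := fun x => K * erf ((x - c)/s) with hF_def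
  have hderiv : ∀ x ∈ Ici (0:ℝ), HasDerivAt F (Real.exp (-(x - c)^2 / (2*ν))) x := by
    intro x _
    have hinner : HasDerivAt (fun x : ℝ => (x - c)/s) (1/s) x := by
      simpa using ((hasDerivAt_id x).sub_const c).div_const s
    have h1 := (erf_hasDerivAt ((x - c)/s)).comp x hinner
    have h2 := h1.const_mul K
    refine h2.congr_deriv ?_
    symm
    have harg : ((x - c)/s)^2 = (x - c)^2/(2*ν) := by
      rw [div_pow, hs2]
    rw [harg]
    have hπ : (0:ℝ) < Real.sqrt Real.pi := Real.sqrt_pos.2 Real.pi_pos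
    field_simp [hK_def, hKs]
    rw [hK_def, hKs]; ring
  have htop : Tendsto F atTop (nhds K) := by
    have harg : Tendsto (fun x : ℝ => (x - c)/s) atTop atTop := by
      apply Tendsto.atTop_div_const hs
      simpa [sub_eq_add_neg] using tendsto_atTop_add_const_right atTop (-c) tendsto_id
    have := (erf_tendsto_one.comp harg).const_mul K
    simpa using this
  have hint : IntegrableOn (fun x => Real.exp (-(x - c)^2 / (2*ν))) (Ioi (0:ℝ)) := by
    have := integrable_mom ν c hν 0
    simpa using this.integrableOn
  have := integral_Ioi_of_hasDerivAt_of_tendsto' hderiv hint htop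
  rw [this, hF_def]
  simp only []
  have h0 : ((0:ℝ) - c)/s = -(c/s) := by ring
  rw [h0, erf_neg]
  ring

lemma M1_integral (ν c : ℝ) (hν : 0 < ν) :
    ∫ x in Ioi (0:ℝ), (x - c) * Real.exp (-(x - c)^2 / (2*ν))
      = ν * Real.exp (-c^2 / (2*ν)) := by
  set F : ℝ → ℝ := fun x => -ν * Real.exp (-(x - c)^2 / (2*ν)) with hF_def
  have hderiv : ∀ x ∈ Ici (0:ℝ), HasDerivAt F ((x - c) * Real.exp (-(x - c)^2 / (2*ν))) x := by
    intro x _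
    have hg : HasDerivAt (fun x : ℝ => -(x - c)^2 / (2*ν)) (-(2*(x - c)) / (2*ν)) x := by
      have := (((hasDerivAt_id x).sub_const c).pow 2).neg.div_const (2*ν)
      simpa using this
    have h1 := hg.exp
    have h2 := h1.const_mul (-ν)
    refine h2.congr_deriv ?_
    symm
    field_simp
  have htop : Tendsto F atTop (nhds 0) := by
    have h1 : Tendsto (fun x : ℝ => (x - c)^2) atTop atTop := by
      have hsub : Tendsto (fun x : ℝ => x - c) atTop atTop := by
        simpa [sub_eq_add_neg] using tendsto_atTop_add_const_right atTop (-c) tendsto_id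
      exact (tendsto_pow_atTop two_ne_zero).comp hsub
    have h2 : Tendsto (fun x : ℝ => (x - c)^2 / (2*ν)) atTop atTop :=
      h1.atTop_div_const (by positivity)
    have h3 : Tendsto (fun x : ℝ => -(x - c)^2 / (2*ν)) atTop atBot := by
      have := tendsto_neg_atTop_atBot.comp h2
      refine this.congr fun x => by simp [Function.comp]; ring
    have h4 : Tendsto (fun x : ℝ => Real.exp (-(x - c)^2 / (2*ν))) atTop (nhds 0) :=
      Real.tendsto_exp_atBot.comp h3
    have h5 := h4.const_mul (-ν)
    rw [mul_zero] at h5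
    exact h5.congr fun x => rfl
  have hint : IntegrableOn (fun x => (x - c) * Real.exp (-(x - c)^2 / (2*ν))) (Ioi (0:ℝ)) := by
    have := integrable_mom ν c hν 1
    simpa using this.integrableOn
  have := integral_Ioi_of_hasDerivAt_of_tendsto' hderiv hint htop
  rw [this, hF_def]
  simp only []
  have h0 : ((0:ℝ) - c)^2 = c^2 := by ring
  rw [h0]
  ring


/-- The normalization constant `A(c) = (2/√(2πν)) / (1 + erf(c/√(2ν)))`. -/
noncomputable def Agauss (ν c : ℝ) : ℝ :=
  (2 / Real.sqrt (2 * Real.pi * ν)) / (1 + erf (c / Real.sqrt (2 * ν)))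

/-- The truncated shifted Gaussian `ρ_c(x) = A(c) exp(−(x−c)²/(2ν))`. -/
noncomputable def ρc (ν c x : ℝ) : ℝ := Agauss ν c * Real.exp (-(x - c) ^ 2 / (2 * ν))

lemma D_pos (ν c : ℝ) : 0 < 1 + erf (c / Real.sqrt (2 * ν)) := by
  linarith [neg_one_lt_erf (c / Real.sqrt (2 * ν))]

lemma rho_mom_integrable (ν c : ℝ) (hν : 0 < ν) (n : ℕ) :
    IntegrableOn (fun x => (x - c) ^ n * ρc ν c x) (Ici (0:ℝ)) := by
  have h := ((integrable_mom ν c hν n).const_mul (Agauss ν c)).integrableOn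
    (s := Ici (0:ℝ))
  refine h.congr_fun (fun x _ => ?_) measurableSet_Ici
  simp only [ρc]; ring

lemma rho_int (ν c : ℝ) (hν : 0 < ν) : ∫ x in Ici (0:ℝ), ρc ν c x = 1 := by
  have hD := D_pos ν c
  have hS : (0:ℝ) < Real.sqrt (2 * Real.pi * ν) := Real.sqrt_pos.2 (by positivity)
  rw [MeasureTheory.integral_Ici_eq_integral_Ioi]
  calc ∫ x in Ioi (0:ℝ), ρc ν c x
      = Agauss ν c * ∫ x in Ioi (0:ℝ), Real.exp (-(x - c)^2 / (2*ν)) := by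
        simp only [ρc]; exact integral_const_mul _ _
    _ = 1 := by
        rw [M0_integral ν c hν, Agauss]
        set S : ℝ := Real.sqrt (2 * Real.pi * ν) with hS_def
        set D : ℝ := 1 + erf (c / Real.sqrt (2 * ν)) with hD_def
        field_simp

lemma rho_mom1 (ν c : ℝ) (hν : 0 < ν) :
    ∫ x in Ici (0:ℝ), (x - c) * ρc ν c x
      = ν * Agauss ν c * Real.exp (-c^2 / (2*ν)) := by
  rw [MeasureTheory.integral_Ici_eq_integral_Ioi]
  calc ∫ x in Ioi (0:ℝ), (x - c) * ρc ν c x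
      = Agauss ν c * ∫ x in Ioi (0:ℝ), (x - c) * Real.exp (-(x - c)^2 / (2*ν)) := by
        rw [← integral_const_mul]
        exact setIntegral_congr_fun measurableSet_Ioi fun x _ => by simp only [ρc]; ring
    _ = ν * Agauss ν c * Real.exp (-c^2 / (2*ν)) := by
        rw [M1_integral ν c hν]; ring

/-- the interaction energy `K[ρ_c] = (1/4)∫₀^∞∫₀^∞ (x−y)² ρ_c(x) ρ_c(y) dx dy`
satisfies `K[ρ_c] = (1/2)∫₀^∞ (x−c)² ρ_c(x) dx − (ν²/2)(A(c) exp(−c²/(2ν)))²`. -/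
theorem stmt_7 (ν c : ℝ) (hν : 0 < ν) :
    (1/4) * ∫ x in Set.Ici (0:ℝ), ∫ y in Set.Ici (0:ℝ), (x - y) ^ 2 * ρc ν c x * ρc ν c y
      = (1/2) * (∫ x in Set.Ici (0:ℝ), (x - c) ^ 2 * ρc ν c x)
        - (ν ^ 2 / 2) * (Agauss ν c * Real.exp (-c ^ 2 / (2 * ν))) ^ 2 := by
  have hm0 : IntegrableOn (fun y => ρc ν c y) (Ici (0:ℝ)) := by
    simpa using rho_mom_integrable ν c hν 0
  have hm1 : IntegrableOn (fun y => (y - c) * ρc ν c y) (Ici (0:ℝ)) := by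
    simpa using rho_mom_integrable ν c hν 1
  have hm2 : IntegrableOn (fun y => (y - c)^2 * ρc ν c y) (Ici (0:ℝ)) :=
    rho_mom_integrable ν c hν 2
  set I0 : ℝ := ∫ x in Set.Ici (0:ℝ), ρc ν c x with hI0_def
  set I1 : ℝ := ∫ x in Set.Ici (0:ℝ), (x - c) * ρc ν c x with hI1_def
  set I2 : ℝ := ∫ x in Set.Ici (0:ℝ), (x - c)^2 * ρc ν c x with hI2_def
  have inner : ∀ x : ℝ, (∫ y in Set.Ici (0:ℝ), (x - y) ^ 2 * ρc ν c x * ρc ν c y)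
      = ρc ν c x * ((x - c)^2 * I0 - 2*(x - c) * I1 + I2) := by
    intro x
    have expand : (fun y => (x - y) ^ 2 * ρc ν c x * ρc ν c y)
        = fun y => ((ρc ν c x * (x - c)^2) * ρc ν c y
            + (-(2*(x - c)*ρc ν c x)) * ((y - c) * ρc ν c y))
            + ρc ν c x * ((y - c)^2 * ρc ν c y) := funext fun y => by ring
    have ha : Integrable (fun y => (ρc ν c x * (x - c)^2) * ρc ν c y
        + (-(2*(x - c)*ρc ν c x)) * ((y - c) * ρc ν c y))
        (volume.restrict (Set.Ici (0:ℝ))) := (hm0.const_mul _).add (hm1.const_mul _)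
    rw [expand, integral_add ha (hm2.const_mul _),
      integral_add (hm0.const_mul _) (hm1.const_mul _),
      integral_const_mul, integral_const_mul, integral_const_mul]
    rw [hI0_def, hI1_def, hI2_def]; ring
  have outer : (∫ x in Set.Ici (0:ℝ), ∫ y in Set.Ici (0:ℝ), (x - y) ^ 2 * ρc ν c x * ρc ν c y)
      = I0 * I2 - 2 * I1 * I1 + I2 * I0 := by
    rw [setIntegral_congr_fun measurableSet_Ici fun x _ => inner x]
    have expand2 : (fun x => ρc ν c x * ((x - c)^2 * I0 - 2*(x - c) * I1 + I2))
        = fun x => ((I0 * ((x - c)^2 * ρc ν c x) + (-(2*I1)) * ((x - c) * ρc ν c x))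
            + I2 * ρc ν c x) := funext fun x => by ring
    have hb : Integrable (fun x => I0 * ((x - c)^2 * ρc ν c x)
        + (-(2*I1)) * ((x - c) * ρc ν c x))
        (volume.restrict (Set.Ici (0:ℝ))) := (hm2.const_mul _).add (hm1.const_mul _)
    rw [expand2, integral_add hb (hm0.const_mul _),
      integral_add (hm2.const_mul _) (hm1.const_mul _),
      integral_const_mul, integral_const_mul, integral_const_mul]
    rw [hI0_def, hI1_def, hI2_def]; ring
  rw [outer]
  have h0 : I0 = 1 := rho_int ν c hν
  have h1 : I1 = ν * Agauss ν c * Real.exp (-c^2 / (2*ν)) := rho_mom1 ν c hν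
  rw [h0, h1]
  ring
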